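/- An ideal I of a commutative ring A satisfies that A/I is a flat A-module if and only if Ann(f) + I = A for all f ∈ I, equivalently, for each f ∈ I there exists g ∈ I such that f = fg. -/

import Mathlib

open TensorProduct LinearMap

theorem flat_iff_mul' (A : Type*) [CommRing A] (I : Ideal A) :
    Module.Flat A (A ⧸ I) ↔ ∀ f ∈ I, ∃ g ∈ I, f = f * g := by
  constructor
  · intro hF f hf
    rw [Module.Flat.iff_rTensor_injective'] at hF
    have hfJ : f ∈ Ideal.span {f} := Ideal.mem_span_singleton_self f
    have h0 : (rTensor (A ⧸ I) (Ideal.span {f}).subtype)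
        ((⟨f, hfJ⟩ : Ideal.span {f}) ⊗ₜ (1 : A ⧸ I)) = 0 := by
      simp only [rTensor_tmul, Submodule.coe_subtype]
      have h1 : (f : A) ⊗ₜ[A] (1 : A ⧸ I) = (1 : A) ⊗ₜ[A] (f • (1 : A ⧸ I)) := by
        rw [← smul_tmul]; norm_num
      have h2 : f • (1 : A ⧸ I) = 0 := by
        have : f • (1 : A ⧸ I) = Submodule.Quotient.mk (f • (1 : A)) := rfl
        rw [this, smul_eq_mul, mul_one, Submodule.Quotient.mk_eq_zero]
        exact hf
      rw [h1, h2, tmul_zero]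
    have hz : ((⟨f, hfJ⟩ : Ideal.span {f}) ⊗ₜ (1 : A ⧸ I)) = 0 := hF _ h0
    have hz2 : tensorQuotEquivQuotSMul (↥(Ideal.span {f})) I
        ((⟨f, hfJ⟩ : Ideal.span {f}) ⊗ₜ (1 : A ⧸ I)) = 0 := by
      rw [hz]; exact (tensorQuotEquivQuotSMul _ I).map_zero
    have h1 : (1 : A ⧸ I) = Ideal.Quotient.mk I 1 := rfl
    rw [h1, tensorQuotEquivQuotSMul_tmul_mk, one_smul, Submodule.Quotient.mk_eq_zero] at hz2
    have hmem : f ∈ I • (Ideal.span {f}) := by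
      have := Submodule.mem_map_of_mem (f := (Ideal.span {f}).subtype) hz2
      rwa [Submodule.map_smul'', Submodule.map_top, Submodule.range_subtype] at this
    erw [Submodule.mem_smul_span_singleton] at hmem
    obtain ⟨g, hg, hgf⟩ := hmem
    have hgf' : g * f = f := by rw [← smul_eq_mul]; exact hgf
    exact ⟨g, hg, by rw [mul_comm, hgf']⟩
  · intro h
    rw [Module.Flat.iff_rTensor_injective']
    intro J
    rw [injective_iff_map_eq_zero]
    intro x hx
    set e := tensorQuotEquivQuotSMul (↥J) I with he
    set e' := tensorQuotEquivQuotSMul A I with he'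
    have hle : (I • ⊤ : Submodule A J) ≤ (I • ⊤ : Submodule A A).comap J.subtype := by
      refine Submodule.smul_le.2 fun r hr m _ => ?_
      exact Submodule.smul_mem_smul hr trivial
    have hnat : (e'.toLinearMap ∘ₗ rTensor (A ⧸ I) J.subtype) =
        (Submodule.mapQ _ _ J.subtype hle) ∘ₗ e.toLinearMap := by
      apply TensorProduct.ext'
      intro j y
      obtain ⟨r, rfl⟩ := Ideal.Quotient.mk_surjective y
      simp only [he, he', LinearMap.comp_apply, LinearEquiv.coe_coe, rTensor_tmul,
        Submodule.coe_subtype, tensorQuotEquivQuotSMul_tmul_mk, Submodule.mapQ_apply,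
        SetLike.val_smul, smul_eq_mul]
      rw [← LinearEquiv.eq_symm_apply]
      show (j : A) ⊗ₜ[A] (Ideal.Quotient.mk I) r = (r * (j : A)) ⊗ₜ[A] (1 : A ⧸ I)
      rw [← smul_eq_mul, smul_tmul]
      congr 1
      show Ideal.Quotient.mk I r = r • Submodule.Quotient.mk (1 : A)
      rw [← Submodule.Quotient.mk_smul, smul_eq_mul, mul_one]
      rfl
    have key : Submodule.mapQ _ _ J.subtype hle (e x) = 0 := by
      have h2 := LinearMap.congr_fun hnat x
      simp only [LinearMap.comp_apply, LinearEquiv.coe_coe] at h2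
      rw [hx, map_zero] at h2
      exact h2.symm
    obtain ⟨y, hy⟩ := Submodule.mkQ_surjective _ (e x)
    rw [← hy] at key
    simp only [Submodule.mkQ_apply, Submodule.mapQ_apply, Submodule.Quotient.mk_eq_zero] at key
    have hyI : (y : A) ∈ I := by
      have : (y : A) ∈ (I • ⊤ : Submodule A A) := key
      rwa [smul_eq_mul, Ideal.mul_top] at this
    obtain ⟨g, hg, hfg⟩ := h y hyI
    have hy0 : y ∈ (I • ⊤ : Submodule A J) := by
      have hgy : y = g • y := Subtype.ext (by simpa [mul_comm] using hfg)
      rw [hgy]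
      exact Submodule.smul_mem_smul hg trivial
    have he0 : e x = 0 := by
      rw [← hy, Submodule.mkQ_apply, Submodule.Quotient.mk_eq_zero]; exact hy0
    exact e.map_eq_zero_iff.mp he0

theorem pure_ideal_characterization (A : Type*) [CommRing A] (I : Ideal A) :
    (Module.Flat A (A ⧸ I) ↔
        ∀ f ∈ I, (Ideal.span {f} : Submodule A A).annihilator + I = ⊤) ∧
      (Module.Flat A (A ⧸ I) ↔ ∀ f ∈ I, ∃ g ∈ I, f = f * g) := by
  have hiff : (∀ f ∈ I, (Ideal.span {f} : Submodule A A).annihilator + I = ⊤) ↔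
      (∀ f ∈ I, ∃ g ∈ I, f = f * g) := by
    constructor
    · intro h f hf
      have h1 : (1 : A) ∈ (Ideal.span {f} : Submodule A A).annihilator + I := by
        rw [h f hf]; trivial
      rw [Submodule.add_eq_sup, Submodule.mem_sup] at h1
      obtain ⟨a, ha, g, hg, hag⟩ := h1
      refine ⟨g, hg, ?_⟩
      have haf : a * f = 0 := by
        have := Submodule.mem_annihilator.mp ha f (Ideal.mem_span_singleton_self f)
        simpa [smul_eq_mul] using this
      calc f = f * (a + g) := by rw [hag, mul_one]
        _ = f * g := by rw [mul_add, mul_comm f a, haf, zero_add]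
    · intro h f hf
      obtain ⟨g, hg, hfg⟩ := h f hf
      rw [eq_top_iff]
      intro x _
      have hann : (1 - g) ∈ (Ideal.span {f} : Submodule A A).annihilator := by
        rw [Submodule.mem_annihilator]
        intro n hn
        rw [Ideal.mem_span_singleton'] at hn
        obtain ⟨c, rfl⟩ := hn
        have : (1 - g) * f = 0 := by
          rw [sub_mul, one_mul, mul_comm g f, ← hfg, sub_self]
        rw [smul_eq_mul, show (1 - g) * (c * f) = c * ((1 - g) * f) by ring, this, mul_zero]
      have : x = x • (1 - g) + x * g := by ring_nf
      rw [this]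
      exact Submodule.add_mem_sup (Submodule.smul_mem _ x hann) (I.mul_mem_left x hg)
  refine ⟨?_, flat_iff_mul' A I⟩
  rw [flat_iff_mul' A I]
  exact hiff.symm
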